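/- Assume the SpaceSaving guarantees with table size K ≥ 6 on a stream of length N with sorted frequency function f, and assume additionally that there are reals C > 0 and α > 1 with f(i) ≤ C/i^α for every i ∈ {1,…,n} (a Zipf-type tail bound). Then the minimum counter satisfies c_K ≤ 6^α · C / ((α − 1)·K^α). -/

import Mathlib

open Finset

/-- Key convexity/Bernoulli step: `(α-1)·(n+1)^{-α} ≤ n^{1-α} - (n+1)^{1-α}`. -/
lemma my_key_step (α : ℝ) (hα : 1 < α) (n : ℕ) (hn : 1 ≤ n) :
    (α - 1) * ((n : ℝ) + 1) ^ (-α) ≤ (n : ℝ) ^ (1 - α) - ((n : ℝ) + 1) ^ (1 - α) := by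
  set a : ℝ := (n : ℝ) with ha_def
  have ha : (1 : ℝ) ≤ a := by rw [ha_def]; exact_mod_cast hn
  have ha0 : (0 : ℝ) < a := by linarith
  have hb0 : (0 : ℝ) < a + 1 := by linarith
  set A : ℝ := a ^ α with hA_def
  set A1 : ℝ := a ^ (1 - α) with hA1_def
  set B : ℝ := (a + 1) ^ α with hB_def
  set B1 : ℝ := (a + 1) ^ (1 - α) with hB1_def
  set Bm : ℝ := (a + 1) ^ (-α) with hBm_def
  have hA0 : 0 < A := Real.rpow_pos_of_pos ha0 _
  have hB0 : 0 < B := Real.rpow_pos_of_pos hb0 _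
  have hBmB : Bm * B = 1 := by
    rw [hBm_def, hB_def, ← Real.rpow_add hb0]; simp
  have hB1B : B1 * B = a + 1 := by
    rw [hB1_def, hB_def, ← Real.rpow_add hb0]; simp
  have hAA1 : A * A1 = a := by
    rw [hA_def, hA1_def, ← Real.rpow_add ha0]; simp
  -- Bernoulli
  have hbern : 1 + α * (1 / a) ≤ (1 + 1 / a) ^ α :=
    one_add_mul_self_le_rpow_one_add
      (by have : (0:ℝ) ≤ 1 / a := by positivity
          linarith) hα.le
  have h1a : (1 : ℝ) + 1 / a = (a + 1) / a := by field_simp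
  have hdiv : ((a + 1) / a) ^ α = B / A := Real.div_rpow hb0.le ha0.le α
  rw [h1a, hdiv, le_div_iff₀ hA0] at hbern
  -- (a + α) * A ≤ B * a
  have h2 : (a + α) * A ≤ B * a := by
    have h := mul_le_mul_of_nonneg_right hbern ha0.le
    have e : (a + α) * A = (1 + α * (1 / a)) * A * a := by field_simp
    rw [e]; exact h
  -- hence a + α ≤ B * A1
  have h3 : a + α ≤ B * A1 := by
    have hBa : B * a = B * A1 * A := by rw [← hAA1]; ring
    rw [hBa] at h2
    exact le_of_mul_le_mul_right (by linarith [h2]) hA0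
  -- conclude
  have h4 : (α - 1) * Bm * B ≤ (A1 - B1) * B := by
    have : (α - 1) * Bm * B = α - 1 := by rw [mul_assoc, hBmB, mul_one]
    rw [this]
    have : (A1 - B1) * B = A1 * B - (a + 1) := by rw [sub_mul, hB1B]
    rw [this]
    nlinarith [h3]
  exact le_of_mul_le_mul_right h4 hB0

/-- Telescoping tail bound for the `p`-series. -/
lemma my_sum_bound (α : ℝ) (hα : 1 < α) (m : ℕ) (hm : 1 ≤ m) :
    ∀ n, m ≤ n → ∑ i ∈ Ioc m n, (α - 1) * (i : ℝ) ^ (-α)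
      ≤ (m : ℝ) ^ (1 - α) - (n : ℝ) ^ (1 - α) := by
  intro n hn
  induction n, hn using Nat.le_induction with
  | base => simp
  | succ n hn IH =>
    rw [sum_Ioc_succ_top hn]
    have hkey := my_key_step α hα n (hm.trans hn)
    have : ((n : ℝ) + 1) = ((n + 1 : ℕ) : ℝ) := by push_cast; ring
    rw [this] at hkey
    linarith

/-- Zipf tail: under the SpaceSaving guarantees with `K ≥ 6`,
if there are reals `C > 0` and `α > 1` with `f i ≤ C / i^α` for all
`i ∈ {1,…,n}`, then `c K ≤ 6^α · C / ((α-1) · K^α)`. -/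
theorem stmt10
    (n K N : ℕ) (f c σ : ℕ → ℕ)
    (hfmono : ∀ i ∈ Finset.Icc 1 n, ∀ j ∈ Finset.Icc 1 n, i ≤ j → f j ≤ f i)
    (hfsum : ∑ i ∈ Finset.Icc 1 n, f i = N)
    (hcmono : ∀ i ∈ Finset.Icc 1 K, ∀ j ∈ Finset.Icc 1 K, i ≤ j → c j ≤ c i)
    (hcsum : ∑ j ∈ Finset.Icc 1 K, c j = N)
    (hσmem : ∀ j ∈ Finset.Icc 1 K, σ j ∈ Finset.Icc 1 n)
    (hσinj : ∀ j ∈ Finset.Icc 1 K, ∀ j' ∈ Finset.Icc 1 K, σ j = σ j' → j = j')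
    (hlow : ∀ j ∈ Finset.Icc 1 K, c j ≤ f (σ j) + c K)
    (hup : ∀ j ∈ Finset.Icc 1 K, f (σ j) ≤ c j)
    (hout : ∀ i ∈ Finset.Icc 1 n, (∀ j ∈ Finset.Icc 1 K, σ j ≠ i) → f i ≤ c K)
    (hK6 : 6 ≤ K)
    (C α : ℝ) (hC : 0 < C) (hα : 1 < α)
    (hzipf : ∀ i ∈ Finset.Icc 1 n, (f i : ℝ) ≤ C / (i : ℝ) ^ α) :
    (c K : ℝ) ≤ (6 : ℝ) ^ α * C / ((α - 1) * (K : ℝ) ^ α) := by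
  -- K ≤ n
  have hKn : K ≤ n := by
    have := Finset.card_le_card_of_injOn σ hσmem
      (fun j hj j' hj' h => hσinj j hj j' hj' h)
    simpa [Nat.card_Icc] using this
  have hKmem : K ∈ Finset.Icc 1 K := Finset.mem_Icc.mpr ⟨by omega, le_rfl⟩
  -- Step 2: f i ≤ c i for i ∈ Icc 1 K
  have key : ∀ i ∈ Finset.Icc 1 K, f i ≤ c i := by
    intro i hi
    by_contra h
    push_neg at h
    obtain ⟨hi1, hiK⟩ := Finset.mem_Icc.mp hi
    have hsurj : Set.SurjOn σ (Finset.Icc 1 (i - 1) : Set ℕ) (Finset.Icc 1 i : Set ℕ) := by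
      intro t ht
      simp only [Finset.coe_Icc, Set.mem_Icc] at ht
      obtain ⟨ht1, hti⟩ := ht
      have htn : t ∈ Finset.Icc 1 n :=
        Finset.mem_Icc.mpr ⟨ht1, le_trans (hti.trans hiK) hKn⟩
      have hft : f i ≤ f t :=
        hfmono t htn i (Finset.mem_Icc.mpr ⟨hi1, hiK.trans hKn⟩) hti
      have hciK : c K ≤ c i := hcmono i hi K hKmem hiK
      -- t must be hit by σ
      have hexj : ∃ j ∈ Finset.Icc 1 K, σ j = t := by
        by_contra hno
        push_neg at hno
        have := hout t htn hno
        omega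
      obtain ⟨j, hj, hjt⟩ := hexj
      have hfj : f (σ j) ≤ c j := hup j hj
      rw [hjt] at hfj
      have hji : j < i := by
        by_contra hge
        push_neg at hge
        have := hcmono i hi j hj hge
        omega
      refine ⟨j, ?_, hjt⟩
      simp only [Finset.coe_Icc, Set.mem_Icc]
      have := (Finset.mem_Icc.mp hj).1
      omega
    have hcard := Finset.card_le_card_of_surjOn σ hsurj
    simp only [Nat.card_Icc] at hcard
    omega
  -- Step 3: counting bound with m = K/2
  set m : ℕ := K / 2 with hm_def
  have hm1 : 1 ≤ m := by omega
  have hmK : m < K := by omega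
  have hmn : m ≤ n := by omega
  have hmain : (K - m) * c K ≤ ∑ i ∈ Ioc m n, f i := by
    have hsplitc : ∑ j ∈ Ioc 0 m, c j + ∑ j ∈ Ioc m K, c j = ∑ j ∈ Ioc 0 K, c j :=
      Finset.sum_Ioc_consecutive _ (by omega) (by omega)
    have hsplitf : ∑ i ∈ Ioc 0 m, f i + ∑ i ∈ Ioc m n, f i = ∑ i ∈ Ioc 0 n, f i :=
      Finset.sum_Ioc_consecutive _ (by omega) (by omega)
    have hIcc : ∀ b : ℕ, Finset.Icc 1 b = Finset.Ioc 0 b := fun b => Finset.Icc_add_one_left_eq_Ioc 0 b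
    have h1 : ∑ i ∈ Ioc 0 m, f i ≤ ∑ j ∈ Ioc 0 m, c j := by
      apply Finset.sum_le_sum
      intro i hi
      have hi' := Finset.mem_Ioc.mp hi
      exact key i (Finset.mem_Icc.mpr ⟨by omega, by omega⟩)
    have h2 : (K - m) * c K ≤ ∑ j ∈ Ioc m K, c j := by
      calc (K - m) * c K = ∑ _j ∈ Ioc m K, c K := by
            rw [Finset.sum_const, Nat.card_Ioc, smul_eq_mul]
        _ ≤ ∑ j ∈ Ioc m K, c j := by
            apply Finset.sum_le_sum
            intro j hj
            have hj' := Finset.mem_Ioc.mp hj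
            exact hcmono j (Finset.mem_Icc.mpr ⟨by omega, hj'.2⟩) K hKmem hj'.2
    rw [hIcc] at hcsum hfsum
    omega
  -- Step 4: cast to ℝ and bound the tail sum
  have hα1 : (0 : ℝ) < α - 1 := by linarith
  have hreal : ((K - m : ℕ) : ℝ) * (c K : ℝ) ≤ C / (α - 1) * (m : ℝ) ^ (1 - α) := by
    have hcast : ((K - m : ℕ) : ℝ) * (c K : ℝ) ≤ ∑ i ∈ Ioc m n, (f i : ℝ) := by
      have := hmain
      push_cast
      exact_mod_cast this
    have htail : ∑ i ∈ Ioc m n, (f i : ℝ) ≤ C / (α - 1) * ((m : ℝ) ^ (1 - α) - (n : ℝ) ^ (1 - α)) := by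
      have hsb := my_sum_bound α hα m hm1 n hmn
      calc ∑ i ∈ Ioc m n, (f i : ℝ)
          ≤ ∑ i ∈ Ioc m n, C / (α - 1) * ((α - 1) * (i : ℝ) ^ (-α)) := by
            apply Finset.sum_le_sum
            intro i hi
            have hi' := Finset.mem_Ioc.mp hi
            have hip : (0 : ℝ) < (i : ℝ) := by
              have : 1 ≤ i := by omega
              exact_mod_cast Nat.lt_of_lt_of_le Nat.zero_lt_one this
            have hz := hzipf i (Finset.mem_Icc.mpr ⟨by omega, hi'.2⟩)
            have : C / (α - 1) * ((α - 1) * (i : ℝ) ^ (-α)) = C / (i : ℝ) ^ α := by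
              rw [Real.rpow_neg hip.le]
              field_simp
            rw [this]; exact hz
        _ = C / (α - 1) * ∑ i ∈ Ioc m n, (α - 1) * (i : ℝ) ^ (-α) := by
            rw [Finset.mul_sum]
        _ ≤ C / (α - 1) * ((m : ℝ) ^ (1 - α) - (n : ℝ) ^ (1 - α)) := by
            apply mul_le_mul_of_nonneg_left hsb (by positivity)
    have hnpos : (0 : ℝ) ≤ (n : ℝ) ^ (1 - α) := by positivity
    have hCα : (0 : ℝ) ≤ C / (α - 1) := by positivity
    nlinarith [hcast, htail]
  -- Step 5: final algebra
  have hKr : (0 : ℝ) < (K : ℝ) := by exact_mod_cast Nat.lt_of_lt_of_le (by norm_num) hK6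
  have hmr : (0 : ℝ) < (m : ℝ) := by exact_mod_cast hm1
  have hdr : (0 : ℝ) < ((K - m : ℕ) : ℝ) := by
    have : 0 < K - m := by omega
    exact_mod_cast this
  have hK6m : (K : ℝ) ≤ 6 * (m : ℝ) := by
    have : K ≤ 6 * m := by omega
    exact_mod_cast this
  have hK6d : (K : ℝ) ≤ 6 * ((K - m : ℕ) : ℝ) := by
    have : K ≤ 6 * (K - m) := by omega
    exact_mod_cast this
  have hx0 : (0 : ℝ) ≤ (c K : ℝ) := Nat.cast_nonneg _
  have hKα : (K : ℝ) ^ α ≤ 6 ^ α * (((K - m : ℕ) : ℝ) * (m : ℝ) ^ (α - 1)) := by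
    have h6 : (0 : ℝ) < 6 := by norm_num
    have hK6pos : (0 : ℝ) < (K : ℝ) / 6 := by positivity
    have e1 : (K : ℝ) ^ α = 6 ^ α * ((K : ℝ) / 6) ^ α := by
      rw [← Real.mul_rpow (by norm_num) hK6pos.le]
      congr 1; field_simp
    have e2 : ((K : ℝ) / 6) ^ α = ((K : ℝ) / 6) * ((K : ℝ) / 6) ^ (α - 1) := by
      nth_rewrite 1 [show α = 1 + (α - 1) by ring]
      rw [Real.rpow_add hK6pos, Real.rpow_one]
    have h3 : ((K : ℝ) / 6) ^ (α - 1) ≤ (m : ℝ) ^ (α - 1) :=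
      Real.rpow_le_rpow hK6pos.le (by linarith) (by linarith)
    have h4 : (K : ℝ) / 6 ≤ ((K - m : ℕ) : ℝ) := by linarith
    rw [e1, e2]
    have h5 : ((K : ℝ) / 6) * ((K : ℝ) / 6) ^ (α - 1) ≤ ((K - m : ℕ) : ℝ) * (m : ℝ) ^ (α - 1) :=
      mul_le_mul h4 h3 (by positivity) (by positivity)
    have h6α : (0 : ℝ) ≤ (6 : ℝ) ^ α := by positivity
    exact mul_le_mul_of_nonneg_left h5 h6α
  have hmm : (m : ℝ) ^ (1 - α) * (m : ℝ) ^ (α - 1) = 1 := by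
    rw [← Real.rpow_add hmr]; simp
  rw [le_div_iff₀ (by positivity)]
  have hmα0 : (0 : ℝ) < (m : ℝ) ^ (α - 1) := by positivity
  have h6α0 : (0 : ℝ) < (6 : ℝ) ^ α := by positivity
  calc (c K : ℝ) * ((α - 1) * (K : ℝ) ^ α)
      ≤ (c K : ℝ) * ((α - 1) * (6 ^ α * (((K - m : ℕ) : ℝ) * (m : ℝ) ^ (α - 1)))) := by
        apply mul_le_mul_of_nonneg_left _ hx0
        exact mul_le_mul_of_nonneg_left hKα hα1.le
    _ = (((K - m : ℕ) : ℝ) * (c K : ℝ)) * ((α - 1) * 6 ^ α * (m : ℝ) ^ (α - 1)) := by ring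
    _ ≤ (C / (α - 1) * (m : ℝ) ^ (1 - α)) * ((α - 1) * 6 ^ α * (m : ℝ) ^ (α - 1)) := by
        apply mul_le_mul_of_nonneg_right hreal
        positivity
    _ = 6 ^ α * C * ((m : ℝ) ^ (1 - α) * (m : ℝ) ^ (α - 1)) * ((α - 1) / (α - 1)) := by ring
    _ = 6 ^ α * C := by
        rw [hmm, div_self (ne_of_gt hα1)]; ring
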